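/- Let 0 < d < 1, let N, m be integers with m/N ≤ c ≤ d/2, and suppose 2m/(dN) < η < 1. Choose thresholds η_0 = η/2, η_1 = η, η_2 = 2η, arbitrary η_2 < η_3 < … < η_M < 1, and η_{M+1} = 1, and set θ_0 = 1 and θ_t = η/(2η_{t+1}) for t = 1,…,M. Let v̄_I ∈ ℝ≥0^m consist of m values all at least max v_{-I}, sort all N samples non-increasingly as v_1 ≥ … ≥ v_N, and let k* = argmax over i with cN < i ≤ N of i·v_i. If δ_I(v̄_I, v_{-I}) > η and k* > dN, then there exist an index j ≥ k* and t ∈ {0,…,M} such that (1−η_{t+1})·v_{k*} ≤ v_j ≤ (1−η_t)·v_{k*} and k*·v_{k*} ≥ j·v_j ≥ k*·v_{k*} − (m/θ_t)·v_{k*}. -/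

import Mathlib

open MeasureTheory ProbabilityTheory Filter

noncomputable section

noncomputable def sortedVal {N : ℕ} (v : Fin N → ℝ) (i : ℕ) : ℝ :=
  (Multiset.sort (↑(List.ofFn v)) (· ≤ ·)).getD (N - i) 0

noncomputable def argmaxIdx (S : Finset ℕ) (f : ℕ → ℝ) : ℕ :=
  WithBot.unbotD 0 ((S.filter fun i => ∀ j ∈ S, f j ≤ f i).max)

noncomputable def ERMIdx (c : ℝ) {N : ℕ} (v : Fin N → ℝ) : ℕ :=
  argmaxIdx ((Finset.Icc 1 N).filter fun i => c * N < (i : ℝ))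
    (fun i => (i : ℝ) * sortedVal v i)

noncomputable def ERM (c : ℝ) {N : ℕ} (v : Fin N → ℝ) : ℝ :=
  sortedVal v (ERMIdx c v)

/-- Incentive-awareness measure `δ_I(v_I, v_{-I})` of a price function `P`,
where the coordinates in `I` are the manipulable ones and `v` records both
`v_I` (on `I`) and `v_{-I}` (off `I`). -/
noncomputable def deltaIdx {N : ℕ} (P : (Fin N → ℝ) → ℝ) (I : Finset (Fin N))
    (v : Fin N → ℝ) : ℝ :=
  1 - sInf {p : ℝ | ∃ b : Fin N → ℝ, (∀ j, 0 ≤ b j) ∧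
      p = P fun j => if j ∈ I then b j else v j} / P v

/-- Worst-case incentive-awareness measure `δ_m^worst(v_{-I})`
(only the coordinates of `v` off `I` matter). -/
noncomputable def deltaWorstIdx {N : ℕ} (P : (Fin N → ℝ) → ℝ) (I : Finset (Fin N))
    (v : Fin N → ℝ) : ℝ :=
  sSup {x : ℝ | ∃ u : Fin N → ℝ, (∀ j, 0 ≤ u j) ∧
      x = deltaIdx P I fun j => if j ∈ I then u j else v j}

/-- `Δ_{N,m}^worst` with explicit index set `I`:
expectation of `δ^worst(v_{-I})` over i.i.d. samples from `μ`. -/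
noncomputable def DeltaWorstIdx {N : ℕ} (μ : Measure ℝ) (P : (Fin N → ℝ) → ℝ)
    (I : Finset (Fin N)) : ℝ :=
  ∫ v : Fin N → ℝ, deltaWorstIdx P I v ∂(Measure.pi fun _ => μ)

/-- The index set `{0, …, m-1}` inside `Fin N`. -/
noncomputable def firstIdx (N m : ℕ) : Finset (Fin N) :=
  Finset.univ.filter fun j => (j : ℕ) < m

/-- The worst-case incentive-awareness measure `Δ_{N,m}^worst`. -/
noncomputable def DeltaWorst {N : ℕ} (μ : Measure ℝ) (P : (Fin N → ℝ) → ℝ) (m : ℕ) : ℝ :=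
  DeltaWorstIdx μ P (firstIdx N m)

/-- Append-based incentive-awareness measure `δ_I(v_I, v_{-I})` for `P = ERM^c`. -/
noncomputable def deltaIA (c : ℝ) {m n : ℕ} (vI : Fin m → ℝ) (w : Fin n → ℝ) : ℝ :=
  1 - sInf {p : ℝ | ∃ b : Fin m → ℝ, (∀ i, 0 ≤ b i) ∧ p = ERM c (Fin.append b w)} /
      ERM c (Fin.append vI w)

/-- Append-based worst-case incentive-awareness measure `δ_m^worst(v_{-I})` for `P = ERM^c`. -/
noncomputable def deltaWorstA (c : ℝ) (m : ℕ) {n : ℕ} (w : Fin n → ℝ) : ℝ :=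
  sSup {x : ℝ | ∃ vI : Fin m → ℝ, (∀ i, 0 ≤ vI i) ∧ x = deltaIA c vI w}

/-- The index `k* = argmax_{i > cN} i·v_i` selected by `ERM^c` when the top `m`
of the `N` samples are fixed to `+∞` and the remaining `N - m` samples are `w`
(so `v_i` for `i > m` is the `(i-m)`-th largest entry of `w`);
ties are broken towards the larger index. -/
noncomputable def kStarInf (c : ℝ) (N m : ℕ) {n : ℕ} (w : Fin n → ℝ) : ℕ :=
  argmaxIdx ((Finset.Icc (m + 1) N).filter fun i => c * N < (i : ℝ))
    (fun i => (i : ℝ) * sortedVal w (i - m))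

/-- Interim utility `u^K(v, p)` of a bidder with value `v` in a second price
auction with reserve price `p` among `K` i.i.d. bidders from `μ`. -/
noncomputable def uK (μ : Measure ℝ) (K : ℕ) (v p : ℝ) : ℝ :=
  ∫ x : Fin (K - 1) → ℝ, max (v - (List.ofFn x).foldr max p) 0 ∂(Measure.pi fun _ => μ)

/-- A distribution on `[0, ∞)` has monotone hazard rate (MHR) if it has a density `f`
whose hazard rate `f v / (1 - F v)` is non-decreasing on its support. -/
def IsMHR (μ : Measure ℝ) : Prop :=
  ∃ f : ℝ → ℝ, (∀ x, 0 ≤ f x) ∧ (∀ x, x < 0 → f x = 0) ∧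
    μ = MeasureTheory.volume.withDensity (fun x => ENNReal.ofReal (f x)) ∧
    MonotoneOn (fun v => f v / (1 - ProbabilityTheory.cdf μ v)) (Function.support f)

/-- `α`-strong regularity: a density `f`, positive on an interval support contained
in `[0, ∞)`, whose virtual value `φ(x) = x - (1 - F x)/f x` satisfies
`φ(y) - φ(x) ≥ α (y - x)` whenever `x < y` on the support. -/
def IsAlphaStronglyRegular (α : ℝ) (μ : Measure ℝ) : Prop :=
  ∃ f : ℝ → ℝ, (∀ x, 0 ≤ f x) ∧
    μ = MeasureTheory.volume.withDensity (fun x => ENNReal.ofReal (f x)) ∧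
    Set.OrdConnected (Function.support f) ∧
    (∀ x ∈ Function.support f, 0 ≤ x) ∧
    (∀ x ∈ Function.support f, ∀ y ∈ Function.support f, x < y →
      α * (y - x) ≤
        (y - (1 - ProbabilityTheory.cdf μ y) / f y) -
          (x - (1 - ProbabilityTheory.cdf μ x) / f x))

end

noncomputable section BadEventAux

/-- `i`-th largest element of a real multiset (1-indexed), 0 out of range. -/
noncomputable def mvalBE (s : Multiset ℝ) (i : ℕ) : ℝ :=
  (s.sort (· ≤ ·)).getD (Multiset.card s - i) 0

private lemma take_le_countP_BE {l : List ℝ} {p : ℝ → Prop} [DecidablePred p] {q : ℕ}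
    (hq : q ≤ l.length) (hp : ∀ x ∈ l.take q, p x) :
    q ≤ Multiset.countP p ↑l := by
  have h1 : (↑(l.take q) : Multiset ℝ) ≤ ↑l := Multiset.coe_le.2 (l.take_sublist q).subperm
  have h2 := Multiset.countP_le_of_le p h1
  have h3 : Multiset.countP p ↑(l.take q) = Multiset.card (↑(l.take q) : Multiset ℝ) :=
    Multiset.countP_eq_card.2 (by simpa using hp)
  have h4 : Multiset.card (↑(l.take q) : Multiset ℝ) = q := by
    rw [Multiset.coe_card, List.length_take]; omega
  omega

private lemma countP_le_of_drop_BE {l : List ℝ} {p : ℝ → Prop} [DecidablePred p] {q : ℕ}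
    (hp : ∀ x ∈ l.drop q, ¬ p x) :
    Multiset.countP p ↑l ≤ q := by
  have hsplit : (↑l : Multiset ℝ) = ↑(l.take q) + ↑(l.drop q) := by
    rw [show (↑(l.take q) + ↑(l.drop q) : Multiset ℝ) = ↑(l.take q ++ l.drop q) from rfl,
        List.take_append_drop]
  rw [hsplit, Multiset.countP_add]
  have h1 : Multiset.countP p ↑(l.take q) ≤ q := by
    have h := Multiset.countP_le_card p (↑(l.take q) : Multiset ℝ)
    rw [Multiset.coe_card, List.length_take] at h
    omega
  have h2 : Multiset.countP p ↑(l.drop q) = 0 :=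
    Multiset.countP_eq_zero.2 (by simpa using hp)
  omega

private lemma sorted_getElem_le_BE {l : List ℝ} (h : l.Pairwise (· ≤ ·)) {i j : ℕ}
    (hi : i < l.length) (hj : j < l.length) (hij : i ≤ j) : l[i] ≤ l[j] := by
  rcases Nat.lt_or_ge i j with hlt | hge
  · exact List.pairwise_iff_getElem.1 h i j hi hj hlt
  · have hij' : i = j := by omega
    subst hij'
    exact le_refl _

private lemma sort_getD_anti_BE {s t : Multiset ℝ} (h : s ≤ t) {q : ℕ}
    (hq : q < Multiset.card s) :
    (t.sort (· ≤ ·)).getD q 0 ≤ (s.sort (· ≤ ·)).getD q 0 := by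
  classical
  have hls : (s.sort (· ≤ ·)).length = Multiset.card s := Multiset.length_sort _
  have hlt : (t.sort (· ≤ ·)).length = Multiset.card t := Multiset.length_sort _
  have hcard : Multiset.card s ≤ Multiset.card t := Multiset.card_le_card h
  have hq1 : q < (s.sort (· ≤ ·)).length := by omega
  have hq2 : q < (t.sort (· ≤ ·)).length := by omega
  rw [List.getD_eq_getElem _ _ hq1, List.getD_eq_getElem _ _ hq2]
  by_contra hcon
  push_neg at hcon
  obtain ⟨a, ha⟩ : ∃ a : ℝ, (s.sort (· ≤ ·))[q]'hq1 = a := ⟨_, rfl⟩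
  rw [ha] at hcon
  have c1 : q + 1 ≤ Multiset.countP (fun x => x ≤ a) s := by
    conv_rhs => rw [← Multiset.sort_eq s (· ≤ ·)]
    refine take_le_countP_BE (by omega) ?_
    intro x hx
    obtain ⟨i, hi, rfl⟩ := List.mem_take_iff_getElem.1 hx
    rw [← ha]
    exact sorted_getElem_le_BE (Multiset.pairwise_sort _ _) (by omega) hq1 (by omega)
  have c2 : Multiset.countP (fun x => x ≤ a) t ≤ q := by
    conv_lhs => rw [← Multiset.sort_eq t (· ≤ ·)]
    refine countP_le_of_drop_BE ?_
    intro x hx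
    obtain ⟨i, hi, rfl⟩ := List.mem_iff_getElem.1 hx
    rw [List.getElem_drop]
    have hlen : q + i < (t.sort (· ≤ ·)).length := by
      rw [List.length_drop] at hi; omega
    have h1 : (t.sort (· ≤ ·))[q]'hq2 ≤ (t.sort (· ≤ ·))[q + i]'hlen :=
      sorted_getElem_le_BE (Multiset.pairwise_sort _ _) hq2 hlen (by omega)
    exact not_le.2 (lt_of_lt_of_le hcon h1)
  have h3 := Multiset.countP_le_of_le (fun x => x ≤ a) h
  omega

private lemma sort_getD_add_le_BE {s u : Multiset ℝ} {q : ℕ} (hq : q < Multiset.card s) :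
    (s.sort (· ≤ ·)).getD q 0 ≤ ((s + u).sort (· ≤ ·)).getD (q + Multiset.card u) 0 := by
  classical
  have hls : (s.sort (· ≤ ·)).length = Multiset.card s := Multiset.length_sort _
  have hlt : ((s + u).sort (· ≤ ·)).length = Multiset.card s + Multiset.card u := by
    rw [Multiset.length_sort, Multiset.card_add]
  have hq1 : q < (s.sort (· ≤ ·)).length := by omega
  have hq2 : q + Multiset.card u < ((s + u).sort (· ≤ ·)).length := by omega
  rw [List.getD_eq_getElem _ _ hq1, List.getD_eq_getElem _ _ hq2]
  by_contra hcon
  push_neg at hcon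
  obtain ⟨a, ha⟩ : ∃ a : ℝ, (s.sort (· ≤ ·))[q]'hq1 = a := ⟨_, rfl⟩
  rw [ha] at hcon
  have c1 : q + Multiset.card u + 1
      ≤ Multiset.countP (fun x => x < a) (s + u) := by
    conv_rhs => rw [← Multiset.sort_eq (s + u) (· ≤ ·)]
    refine take_le_countP_BE (by omega) ?_
    intro x hx
    obtain ⟨i, hi, rfl⟩ := List.mem_take_iff_getElem.1 hx
    exact lt_of_le_of_lt
      (sorted_getElem_le_BE (Multiset.pairwise_sort _ _) (by omega) hq2 (by omega)) hcon
  have c2 : Multiset.countP (fun x => x < a) s ≤ q := by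
    conv_lhs => rw [← Multiset.sort_eq s (· ≤ ·)]
    refine countP_le_of_drop_BE ?_
    intro x hx
    obtain ⟨i, hi, rfl⟩ := List.mem_iff_getElem.1 hx
    rw [List.getElem_drop]
    have hlen : q + i < (s.sort (· ≤ ·)).length := by
      rw [List.length_drop] at hi; omega
    rw [← ha]
    exact not_lt.2 (sorted_getElem_le_BE (Multiset.pairwise_sort _ _) hq1 hlen (by omega))
  have c3 : Multiset.countP (fun x => x < a) u ≤ Multiset.card u :=
    Multiset.countP_le_card _ _
  have c4 := Multiset.countP_add (fun x => x < a) s u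
  omega

private lemma sort_add_eq_BE {s u : Multiset ℝ} (h : ∀ x ∈ s, ∀ y ∈ u, x ≤ y) :
    (s + u).sort (· ≤ ·) = s.sort (· ≤ ·) ++ u.sort (· ≤ ·) := by
  have hperm : List.Perm ((s + u).sort (· ≤ ·)) (s.sort (· ≤ ·) ++ u.sort (· ≤ ·)) := by
    rw [← Multiset.coe_eq_coe,
      show (↑(s.sort (· ≤ ·) ++ u.sort (· ≤ ·)) : Multiset ℝ)
        = (↑(s.sort (· ≤ ·)) : Multiset ℝ) + ↑(u.sort (· ≤ ·)) from rfl,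
      Multiset.sort_eq, Multiset.sort_eq, Multiset.sort_eq]
  have hsorted : (s.sort (· ≤ ·) ++ u.sort (· ≤ ·)).Pairwise (· ≤ ·) := by
    rw [List.pairwise_append]
    exact ⟨Multiset.pairwise_sort _ _, Multiset.pairwise_sort _ _,
      fun x hx y hy => h x ((Multiset.mem_sort _).1 hx) y ((Multiset.mem_sort _).1 hy)⟩
  exact List.Perm.eq_of_pairwise' (Multiset.pairwise_sort _ _) hsorted hperm

private lemma mvalBE_nonneg {s : Multiset ℝ} (h : ∀ x ∈ s, 0 ≤ x) (i : ℕ) : 0 ≤ mvalBE s i := by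
  unfold mvalBE
  rcases Nat.lt_or_ge (Multiset.card s - i) (s.sort (· ≤ ·)).length with hq | hq
  · rw [List.getD_eq_getElem _ _ hq]
    exact h _ ((Multiset.mem_sort _).1 (List.getElem_mem hq))
  · rw [List.getD_eq_default _ _ hq]

private lemma mvalBE_le_add (s u : Multiset ℝ) {i : ℕ} (h1 : 1 ≤ i) (h2 : i ≤ Multiset.card s) :
    mvalBE s i ≤ mvalBE (s + u) i := by
  unfold mvalBE
  have e : Multiset.card (s + u) - i = (Multiset.card s - i) + Multiset.card u := by
    rw [Multiset.card_add]; omega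
  rw [e]
  exact sort_getD_add_le_BE (by omega)

private lemma mvalBE_add_le (s u : Multiset ℝ) {i : ℕ} (h1 : Multiset.card u < i)
    (h2 : i ≤ Multiset.card s + Multiset.card u) :
    mvalBE (s + u) i ≤ mvalBE s (i - Multiset.card u) := by
  unfold mvalBE
  have e : Multiset.card s - (i - Multiset.card u) = Multiset.card (s + u) - i := by
    rw [Multiset.card_add]; omega
  rw [e]
  exact sort_getD_anti_BE (Multiset.le_add_right s u) (by rw [Multiset.card_add]; omega)

private lemma mvalBE_add_top {s u : Multiset ℝ} (h : ∀ x ∈ s, ∀ y ∈ u, x ≤ y) {i : ℕ}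
    (h1 : Multiset.card u < i) (h2 : i ≤ Multiset.card s + Multiset.card u) :
    mvalBE (s + u) i = mvalBE s (i - Multiset.card u) := by
  unfold mvalBE
  rw [Multiset.card_add, sort_add_eq_BE h,
    List.getD_append _ _ _ _ (by rw [Multiset.length_sort]; omega)]
  congr 1
  omega

private lemma sortedVal_append_eq_BE {m n : ℕ} (a : Fin m → ℝ) (b : Fin n → ℝ) (i : ℕ) :
    sortedVal (Fin.append a b) i
      = mvalBE ((↑(List.ofFn a) : Multiset ℝ) + ↑(List.ofFn b)) i := by
  have hcoe : (↑(List.ofFn (Fin.append a b)) : Multiset ℝ)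
      = (↑(List.ofFn a) : Multiset ℝ) + ↑(List.ofFn b) := by
    rw [List.ofFn_fin_append a b]; rfl
  unfold sortedVal mvalBE
  rw [hcoe]
  congr 1
  rw [Multiset.card_add, Multiset.coe_card, Multiset.coe_card,
    List.length_ofFn, List.length_ofFn]

private lemma argmaxIdx_spec_BE (S : Finset ℕ) (f : ℕ → ℝ) (h : S.Nonempty) :
    argmaxIdx S f ∈ S ∧ ∀ j ∈ S, f j ≤ f (argmaxIdx S f) := by
  obtain ⟨b, hb, hmax⟩ := S.exists_max_image f h
  have hF : (S.filter fun i => ∀ j ∈ S, f j ≤ f i).Nonempty :=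
    ⟨b, Finset.mem_filter.2 ⟨hb, hmax⟩⟩
  have key : argmaxIdx S f ∈ S.filter fun i => ∀ j ∈ S, f j ≤ f i := by
    unfold argmaxIdx
    rw [← Finset.coe_max' hF, WithBot.unbotD_coe]
    exact Finset.max'_mem _ hF
  have h' := Finset.mem_filter.1 key
  exact ⟨h'.1, h'.2⟩

private lemma ERMfilter_ne_BE {N : ℕ} (c : ℝ) (hN : 1 ≤ N) (hc : c < 1) :
    ((Finset.Icc 1 N).filter fun i : ℕ => c * N < (i : ℝ)).Nonempty := by
  refine ⟨N, Finset.mem_filter.2 ⟨Finset.mem_Icc.2 ⟨hN, le_refl N⟩, ?_⟩⟩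
  have hN' : (0:ℝ) < N := by exact_mod_cast hN
  calc c * N < 1 * N := mul_lt_mul_of_pos_right hc hN'
  _ = N := one_mul _

private lemma ERMIdx_spec_BE {N : ℕ} (c : ℝ) (v : Fin N → ℝ)
    (h : ((Finset.Icc 1 N).filter fun i : ℕ => c * N < (i : ℝ)).Nonempty) :
    (1 ≤ ERMIdx c v ∧ ERMIdx c v ≤ N ∧ c * N < (ERMIdx c v : ℝ)) ∧
    ∀ i, 1 ≤ i → i ≤ N → c * N < (i : ℝ) →
      (i : ℝ) * sortedVal v i ≤ (ERMIdx c v : ℝ) * sortedVal v (ERMIdx c v) := by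
  obtain ⟨h1, h2⟩ := argmaxIdx_spec_BE _ (fun i => (i : ℝ) * sortedVal v i) h
  rw [Finset.mem_filter, Finset.mem_Icc] at h1
  exact ⟨⟨h1.1.1, h1.1.2, h1.2⟩, fun i hi1 hi2 hi3 =>
    h2 i (Finset.mem_filter.2 ⟨Finset.mem_Icc.2 ⟨hi1, hi2⟩, hi3⟩)⟩

private lemma sortedVal_append_nonneg_BE {m n : ℕ} {a : Fin m → ℝ} {b : Fin n → ℝ}
    (ha : ∀ i, 0 ≤ a i) (hb : ∀ i, 0 ≤ b i) (i : ℕ) :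
    0 ≤ sortedVal (Fin.append a b) i := by
  rw [sortedVal_append_eq_BE]
  refine mvalBE_nonneg ?_ i
  intro x hx
  rcases Multiset.mem_add.1 hx with h | h
  · obtain ⟨j, rfl⟩ := List.mem_ofFn.1 (Multiset.mem_coe.1 h)
    exact ha j
  · obtain ⟨j, rfl⟩ := List.mem_ofFn.1 (Multiset.mem_coe.1 h)
    exact hb j

private lemma sortedVal_append_top_BE {m n : ℕ} (a : Fin m → ℝ) (b : Fin n → ℝ)
    (h : ∀ i j, b j ≤ a i) {i : ℕ} (h1 : m < i) (h2 : i ≤ m + n) :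
    sortedVal (Fin.append a b) i = mvalBE (↑(List.ofFn b)) (i - m) := by
  rw [sortedVal_append_eq_BE,
    show (↑(List.ofFn a) + ↑(List.ofFn b) : Multiset ℝ)
      = (↑(List.ofFn b) : Multiset ℝ) + ↑(List.ofFn a) from add_comm _ _]
  have hca : Multiset.card (↑(List.ofFn a) : Multiset ℝ) = m := by simp
  have hcb : Multiset.card (↑(List.ofFn b) : Multiset ℝ) = n := by simp
  have hmem : ∀ x ∈ (↑(List.ofFn b) : Multiset ℝ), ∀ y ∈ (↑(List.ofFn a) : Multiset ℝ), x ≤ y := by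
    intro x hx y hy
    obtain ⟨j, rfl⟩ := List.mem_ofFn.1 (Multiset.mem_coe.1 hx)
    obtain ⟨k, rfl⟩ := List.mem_ofFn.1 (Multiset.mem_coe.1 hy)
    exact h k j
  rw [mvalBE_add_top hmem (by omega) (by omega), hca]

end BadEventAux

set_option maxHeartbeats 1000000 in
/-- Lemma on bad events; Lemma 7 in the paper. With `N = m + n`
samples, `m/N ≤ c ≤ d/2`, `2m/(dN) < η < 1`, thresholds `η_0 = η/2 < η_1 = η <
η_2 = 2η < η_3 < ⋯ < η_M < 1`, `η_{M+1} = 1`, and weights `θ_0 = 1`,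
`θ_t = η/(2η_{t+1})` for `1 ≤ t ≤ M`: if `vbar` consists of `m` values at least
`max w`, `v` is the combined sorted sample vector, `k*` is the index selected by
`ERM^c`, `δ_I(vbar, w) > η` and `k* > dN`, then there are `j ≥ k*` and `t ≤ M` with
`(1-η_{t+1})·v_{k*} ≤ v_j ≤ (1-η_t)·v_{k*}` and
`k*·v_{k*} ≥ j·v_j ≥ k*·v_{k*} − (m/θ_t)·v_{k*}`. -/
theorem bad_event_exists (d : ℝ) (hd0 : 0 < d) (hd1 : d < 1)
    (m n : ℕ) (c : ℝ) (hc : (m : ℝ) / (m + n) ≤ c) (hcd : c ≤ d / 2)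
    (η : ℝ) (hη : 2 * m / (d * (m + n)) < η) (hη1 : η < 1)
    (M : ℕ) (hM : 2 ≤ M) (ηs : ℕ → ℝ)
    (h0 : ηs 0 = η / 2) (h1 : ηs 1 = η) (h2 : ηs 2 = 2 * η)
    (hmono : ∀ t, 2 ≤ t → t < M → ηs t < ηs (t + 1))
    (hlast : ηs M < 1) (htop : ηs (M + 1) = 1)
    (θ : ℕ → ℝ) (hθ0 : θ 0 = 1)
    (hθ : ∀ t, 1 ≤ t → t ≤ M → θ t = η / (2 * ηs (t + 1)))
    (w : Fin n → ℝ) (hw : ∀ j, 0 ≤ w j)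
    (vbar : Fin m → ℝ) (hvbar : ∀ i j, w j ≤ vbar i)
    (hdelta : η < deltaIA c vbar w)
    (hkstar : d * (m + n) < (ERMIdx c (Fin.append vbar w) : ℝ)) :
    ∃ j t : ℕ, ERMIdx c (Fin.append vbar w) ≤ j ∧ j ≤ m + n ∧ t ≤ M ∧
      (1 - ηs (t + 1)) * sortedVal (Fin.append vbar w) (ERMIdx c (Fin.append vbar w))
        ≤ sortedVal (Fin.append vbar w) j ∧
      sortedVal (Fin.append vbar w) j
        ≤ (1 - ηs t) * sortedVal (Fin.append vbar w) (ERMIdx c (Fin.append vbar w)) ∧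
      (j : ℝ) * sortedVal (Fin.append vbar w) j
        ≤ (ERMIdx c (Fin.append vbar w) : ℝ) *
            sortedVal (Fin.append vbar w) (ERMIdx c (Fin.append vbar w)) ∧
      (ERMIdx c (Fin.append vbar w) : ℝ) *
          sortedVal (Fin.append vbar w) (ERMIdx c (Fin.append vbar w))
        - ((m : ℝ) / θ t) *
            sortedVal (Fin.append vbar w) (ERMIdx c (Fin.append vbar w))
        ≤ (j : ℝ) * sortedVal (Fin.append vbar w) j := by
  classical
  have hc1 : c < 1 := lt_of_le_of_lt hcd (by linarith)
  -- n is positive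
  have hn : 0 < n := by
    rcases Nat.eq_zero_or_pos n with hn0 | hn0
    · exfalso
      subst hn0
      rcases Nat.eq_zero_or_pos m with hm0 | hm0
      · subst hm0
        have hzero : ERMIdx c (Fin.append vbar w) = 0 := by
          unfold ERMIdx argmaxIdx
          simp
        rw [hzero] at hkstar
        norm_num at hkstar
      · have hm' : (0:ℝ) < m := by exact_mod_cast hm0
        have hceq : (m:ℝ) + ((0:ℕ):ℝ) = (m:ℝ) := by push_cast; ring
        rw [hceq, div_self (ne_of_gt hm')] at hc
        linarith
    · exact hn0
  have hNr : (0:ℝ) < (m:ℝ) + n := by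
    have : (0:ℝ) < (n:ℝ) := by exact_mod_cast hn
    have : (0:ℝ) ≤ (m:ℝ) := Nat.cast_nonneg m
    linarith
  have hcast : ((m + n : ℕ) : ℝ) = (m:ℝ) + (n:ℝ) := by push_cast; ring
  -- nonnegativity of all entries
  have hvb0 : ∀ i, 0 ≤ vbar i := fun i => le_trans (hw ⟨0, hn⟩) (hvbar i ⟨0, hn⟩)
  have hVnn : ∀ i, 0 ≤ sortedVal (Fin.append vbar w) i :=
    sortedVal_append_nonneg_BE hvb0 hw
  -- unfold the incentive-awareness hypothesis
  unfold deltaIA ERM at hdelta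
  -- spec of k*
  have hfilne := ERMfilter_ne_BE (N := m + n) c (by omega) hc1
  obtain ⟨⟨hk1, hk2, hk3⟩, hkmax⟩ := ERMIdx_spec_BE c (Fin.append vbar w) hfilne
  simp only [hcast] at hk3 hkmax
  set kst := ERMIdx c (Fin.append vbar w) with hkstdef
  set Vk := sortedVal (Fin.append vbar w) kst with hVkdef
  -- numeric facts
  have hη0 : 0 < η := by
    have h2m : (0:ℝ) ≤ 2*m / (d*((m:ℝ)+n)) :=
      div_nonneg (by positivity) (le_of_lt (mul_pos hd0 hNr))
    calc (0:ℝ) ≤ 2*m / (d*((m:ℝ)+n)) := h2m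
    _ < η := hη
  have hf4 : 2*(m:ℝ) < η * (d * ((m:ℝ)+n)) :=
    (div_lt_iff₀ (mul_pos hd0 hNr)).1 hη
  have hK : d * ((m:ℝ)+n) < (kst:ℝ) := hkstar
  have hf5 : 2*(m:ℝ) < η * kst :=
    lt_of_lt_of_le hf4 (mul_le_mul_of_nonneg_left (le_of_lt hK) (le_of_lt hη0))
  have hc0 : 0 ≤ c := le_trans (div_nonneg (Nat.cast_nonneg m) (le_of_lt hNr)) hc
  have hf1 : (m:ℝ) ≤ c * ((m:ℝ)+n) := (div_le_iff₀ hNr).1 hc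
  have hf6 : c * ((m:ℝ)+n) ≤ d/2 * ((m:ℝ)+n) := mul_le_mul_of_nonneg_right hcd (le_of_lt hNr)
  have hcN0 : 0 ≤ c * ((m:ℝ)+n) := mul_nonneg hc0 (le_of_lt hNr)
  have hf7 : (m:ℝ) + c*((m:ℝ)+n) < (kst:ℝ) := by linarith
  have hmk : m < kst := by
    have : (m:ℝ) < (kst:ℝ) := by linarith
    exact_mod_cast this
  -- trivial case: Vk = 0
  by_cases hVk : Vk ≤ 0
  · have hVkeq : Vk = 0 := le_antisymm hVk (hVnn _)
    refine ⟨kst, 0, le_refl _, hk2, by omega, ?_, ?_, ?_, ?_⟩ <;>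
      rw [← hVkdef, hVkeq] <;> simp
  push_neg at hVk
  -- extract a successful manipulation
  have hsinflt : sInf {p : ℝ | ∃ b : Fin m → ℝ, (∀ i, 0 ≤ b i) ∧
      p = sortedVal (Fin.append b w) (ERMIdx c (Fin.append b w))} < (1 - η) * Vk := by
    have hdiv : sInf {p : ℝ | ∃ b : Fin m → ℝ, (∀ i, 0 ≤ b i) ∧
        p = sortedVal (Fin.append b w) (ERMIdx c (Fin.append b w))} / Vk < 1 - η := by
      linarith
    exact (div_lt_iff₀ hVk).1 hdiv
  have hTne : ({p : ℝ | ∃ b : Fin m → ℝ, (∀ i, 0 ≤ b i) ∧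
      p = sortedVal (Fin.append b w) (ERMIdx c (Fin.append b w))}).Nonempty :=
    ⟨_, ⟨fun _ => (0:ℝ), fun _ => le_refl (0:ℝ), rfl⟩⟩
  obtain ⟨p, hpmem, hplt⟩ := exists_lt_of_csInf_lt hTne hsinflt
  obtain ⟨b, hb0, hpb⟩ := hpmem
  -- spec of k'
  obtain ⟨⟨hj1, hj2, hj3⟩, hjmax⟩ := ERMIdx_spec_BE c (Fin.append b w) hfilne
  simp only [hcast] at hj3 hjmax
  set kpr := ERMIdx c (Fin.append b w) with hkprdef
  set Vj := sortedVal (Fin.append vbar w) kpr with hVjdef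
  have hi0cast : ((kst - m : ℕ) : ℝ) = (kst:ℝ) - m := by
    exact_mod_cast Nat.cast_sub (le_of_lt hmk)
  -- key1 : Vk ≤ v'_{k*-m}
  have key1 : Vk ≤ sortedVal (Fin.append b w) (kst - m) := by
    have e1 : Vk = mvalBE (↑(List.ofFn w)) (kst - m) :=
      sortedVal_append_top_BE vbar w hvbar hmk hk2
    have e2 : sortedVal (Fin.append b w) (kst - m)
        = mvalBE ((↑(List.ofFn b) : Multiset ℝ) + ↑(List.ofFn w)) (kst - m) :=
      sortedVal_append_eq_BE b w _
    rw [e1, e2, show ((↑(List.ofFn b) : Multiset ℝ) + ↑(List.ofFn w))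
        = (↑(List.ofFn w) : Multiset ℝ) + ↑(List.ofFn b) from add_comm _ _]
    refine mvalBE_le_add _ _ (by omega) ?_
    rw [Multiset.coe_card, List.length_ofFn]
    omega
  -- key2 : (k*-m) Vk ≤ k' p
  have hi0mem := hjmax (kst - m) (by omega) (by omega)
    (by rw [hi0cast]; linarith)
  rw [← hpb] at hi0mem
  have key2 : ((kst:ℝ) - m) * Vk ≤ (kpr:ℝ) * p := by
    calc ((kst:ℝ) - m) * Vk ≤ ((kst:ℝ) - m) * sortedVal (Fin.append b w) (kst - m) :=
        mul_le_mul_of_nonneg_left key1 (by linarith)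
    _ = ((kst - m : ℕ):ℝ) * sortedVal (Fin.append b w) (kst - m) := by rw [hi0cast]
    _ ≤ (kpr:ℝ) * p := hi0mem
  have hppos : 0 ≤ p := by
    rw [hpb]; exact sortedVal_append_nonneg_BE hb0 hw _
  have hJpos : (0:ℝ) < (kpr:ℝ) := by
    have : (0:ℕ) < kpr := by omega
    exact_mod_cast this
  -- k* < k'
  have hstep : (kst:ℝ) - m < (kpr:ℝ) * (1 - η) := by
    have hmul : (kpr:ℝ) * p < (kpr:ℝ) * ((1 - η) * Vk) := mul_lt_mul_of_pos_left hplt hJpos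
    have h2' : ((kst:ℝ) - m) * Vk < ((kpr:ℝ) * (1 - η)) * Vk := by
      calc ((kst:ℝ) - m) * Vk ≤ (kpr:ℝ) * p := key2
      _ < (kpr:ℝ) * ((1 - η) * Vk) := hmul
      _ = ((kpr:ℝ) * (1 - η)) * Vk := by ring
    exact lt_of_mul_lt_mul_right h2' (le_of_lt hVk)
  have hKJ : (kst:ℝ) < (kpr:ℝ) := by
    have h3 : (kst:ℝ) * (1 - η) ≤ (kst:ℝ) - m := by
      have hm0' : (0:ℝ) ≤ (m:ℝ) := Nat.cast_nonneg m
      have e : (kst:ℝ) * (1 - η) = (kst:ℝ) - (kst:ℝ) * η := by ring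
      have cm : η * (kst:ℝ) = (kst:ℝ) * η := mul_comm _ _
      rw [e]
      linarith
    have h4 : (kst:ℝ) * (1 - η) < (kpr:ℝ) * (1 - η) := lt_of_le_of_lt h3 hstep
    exact lt_of_mul_lt_mul_right h4 (by linarith : (0:ℝ) ≤ 1 - η)
  have hkj : kst < kpr := by exact_mod_cast hKJ
  -- key3 : p ≤ v_{k'}
  have key3 : p ≤ Vj := by
    have e3 : Vj = mvalBE (↑(List.ofFn w)) (kpr - m) :=
      sortedVal_append_top_BE vbar w hvbar (by omega) hj2
    rw [hpb, sortedVal_append_eq_BE b w,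
      show ((↑(List.ofFn b) : Multiset ℝ) + ↑(List.ofFn w))
        = (↑(List.ofFn w) : Multiset ℝ) + ↑(List.ofFn b) from add_comm _ _, e3]
    have hres := mvalBE_add_le (↑(List.ofFn w) : Multiset ℝ) (↑(List.ofFn b) : Multiset ℝ)
      (i := kpr)
      (by rw [Multiset.coe_card, List.length_ofFn]; omega)
      (by rw [Multiset.coe_card, Multiset.coe_card, List.length_ofFn, List.length_ofFn]; omega)
    simp only [Multiset.coe_card, List.length_ofFn] at hres
    exact hres
  have hVj0 : 0 ≤ Vj := hVnn _
  have key4 : ((kst:ℝ) - m) * Vk ≤ (kpr:ℝ) * Vj :=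
    le_trans key2 (mul_le_mul_of_nonneg_left key3 (le_of_lt hJpos))
  have key5 : (kpr:ℝ) * Vj ≤ (kst:ℝ) * Vk := hkmax kpr hj1 hj2 hj3
  -- key6 : Vj ≤ (1 - η/2) Vk
  have key6 : Vj ≤ (1 - η/2) * Vk := by
    by_contra hcon
    push_neg at hcon
    have e5 : (kpr:ℝ) * ((1 - η/2) * Vk) < (kpr:ℝ) * Vj := mul_lt_mul_of_pos_left hcon hJpos
    have e6 : ((kpr:ℝ) * (1 - η/2)) * Vk < (kst:ℝ) * Vk := by
      calc ((kpr:ℝ) * (1 - η/2)) * Vk = (kpr:ℝ) * ((1 - η/2) * Vk) := by ring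
      _ < (kpr:ℝ) * Vj := e5
      _ ≤ (kst:ℝ) * Vk := key5
    have e7 : (kpr:ℝ) * (1 - η/2) < (kst:ℝ) := lt_of_mul_lt_mul_right e6 (le_of_lt hVk)
    have e8 : (kst:ℝ) * η < (kpr:ℝ) * η := mul_lt_mul_of_pos_right hKJ hη0
    have x1 : (kpr:ℝ) * (1 - η) = (kpr:ℝ) - (kpr:ℝ) * η := by ring
    have x2 : (kpr:ℝ) * (1 - η/2) = (kpr:ℝ) - (kpr:ℝ) * η / 2 := by ring
    have cm : η * (kst:ℝ) = (kst:ℝ) * η := mul_comm _ _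
    rw [x1] at hstep
    rw [x2] at e7
    linarith
  -- choose t
  have h0T : 0 ∈ (Finset.range (M+1)).filter (fun s => Vj ≤ (1 - ηs s) * Vk) :=
    Finset.mem_filter.2 ⟨Finset.mem_range.2 (by omega), by rw [h0]; exact key6⟩
  have hTne' : ((Finset.range (M+1)).filter (fun s => Vj ≤ (1 - ηs s) * Vk)).Nonempty :=
    ⟨0, h0T⟩
  set t := ((Finset.range (M+1)).filter (fun s => Vj ≤ (1 - ηs s) * Vk)).max' hTne' with htdef
  have htmem : t ∈ (Finset.range (M+1)).filter (fun s => Vj ≤ (1 - ηs s) * Vk) :=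
    Finset.max'_mem _ hTne'
  obtain ⟨htrange, htup⟩ := Finset.mem_filter.1 htmem
  have htM : t ≤ M := by
    have := Finset.mem_range.1 htrange; omega
  have htlow : (1 - ηs (t+1)) * Vk ≤ Vj := by
    rcases Nat.lt_or_ge t M with hlt | hge
    · by_contra hcon
      push_neg at hcon
      have hmem2 : t+1 ∈ (Finset.range (M+1)).filter (fun s => Vj ≤ (1 - ηs s) * Vk) :=
        Finset.mem_filter.2 ⟨Finset.mem_range.2 (by omega), le_of_lt hcon⟩
      have := Finset.le_max' _ _ hmem2
      omega
    · have hteq : t = M := by omega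
      rw [hteq, htop]
      simpa using hVj0
  -- the weight bound
  have hchain : ∀ s : ℕ, 2 + s ≤ M → η ≤ ηs (2 + s) := by
    intro s
    induction s with
    | zero => intro _; rw [h2]; linarith
    | succ k ih =>
      intro hle
      have hk2' := ih (by omega)
      have hstep' := hmono (2+k) (by omega) (by omega)
      have he : 2 + (k+1) = (2+k)+1 := by omega
      rw [he]
      linarith
  have hθle : (m:ℝ) ≤ (m:ℝ) / θ t := by
    rcases Nat.eq_zero_or_pos t with ht0 | ht1
    · rw [ht0, hθ0, div_one]
    · have hX : η ≤ ηs (t+1) := by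
        rcases Nat.lt_or_ge t M with h | h
        · have he : t+1 = 2 + (t-1) := by omega
          rw [he]; exact hchain (t-1) (by omega)
        · have he : t+1 = M+1 := by omega
          rw [he, htop]; linarith
      have hXpos : 0 < ηs (t+1) := lt_of_lt_of_le hη0 hX
      rw [hθ t ht1 htM, div_div_eq_mul_div, le_div_iff₀ hη0]
      have hm0' : (0:ℝ) ≤ (m:ℝ) := Nat.cast_nonneg m
      have hb1 : (m:ℝ) * η ≤ (m:ℝ) * ηs (t+1) := mul_le_mul_of_nonneg_left hX hm0'
      have hb2 : (0:ℝ) ≤ (m:ℝ) * ηs (t+1) := mul_nonneg hm0' (le_of_lt hXpos)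
      linarith
  have hfinal : (kst:ℝ) * Vk - ((m:ℝ) / θ t) * Vk ≤ (kpr:ℝ) * Vj := by
    have h1' : (m:ℝ) * Vk ≤ ((m:ℝ) / θ t) * Vk :=
      mul_le_mul_of_nonneg_right hθle (le_of_lt hVk)
    have expand : ((kst:ℝ) - m) * Vk = (kst:ℝ) * Vk - (m:ℝ) * Vk := by ring
    rw [expand] at key4
    linarith
  exact ⟨kpr, t, le_of_lt hkj, hj2, htM, htlow, htup, key5, hfinal⟩
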